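/- Let τ > 0 and let A : [0,τ) → ℝ^{n×n} be continuous. Assume the system ẋ = A(t)x is prescribed-time attractive at τ, and that for every pair of indices i,j, the entry A_{ij}(t) tends to a limit in the extended reals [−∞,+∞] as t → τ⁻. Then there exist indices i,j such that |A_{ij}(t)| → +∞ as t → τ⁻. -/

import Mathlib

open Matrix Filter Topology

/-- Eigenvalues of a real matrix that is Hermitian (= symmetric); junk value `0` otherwise. -/
noncomputable def eigs {n : ℕ} (M : Matrix (Fin n) (Fin n) ℝ) : Fin n → ℝ :=
  if h : M.IsHermitian then h.eigenvalues else 0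

/-- Largest eigenvalue of a real symmetric matrix. -/
noncomputable def lamMax {n : ℕ} (M : Matrix (Fin n) (Fin n) ℝ) : ℝ := ⨆ i, eigs M i

/-- Smallest eigenvalue of a real symmetric matrix. -/
noncomputable def lamMin {n : ℕ} (M : Matrix (Fin n) (Fin n) ℝ) : ℝ := ⨅ i, eigs M i

/-- Logarithmic norm w.r.t. the Euclidean norm: `μ(M) = λ_max((M + Mᵀ)/2)`. -/
noncomputable def logNorm {n : ℕ} (M : Matrix (Fin n) (Fin n) ℝ) : ℝ :=
  lamMax ((1 / 2 : ℝ) • (M + Mᵀ))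

/-- A matrix acting on Euclidean space. -/
noncomputable def mulVecE {n : ℕ} (M : Matrix (Fin n) (Fin n) ℝ)
    (v : EuclideanSpace ℝ (Fin n)) : EuclideanSpace ℝ (Fin n) :=
  Matrix.toEuclideanCLM (𝕜 := ℝ) M v

/-- Operator norm of a matrix induced by the Euclidean vector norm. -/
noncomputable def opNorm {n : ℕ} (M : Matrix (Fin n) (Fin n) ℝ) : ℝ :=
  ‖Matrix.toEuclideanCLM (𝕜 := ℝ) M‖

/-- The LTV system `x' = A t * x` is prescribed-time attractive (PTA) at time `τ`:
every solution on `[0, τ)` satisfies `‖x t‖ → 0` as `t → τ⁻`. -/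
def PTA {n : ℕ} (A : ℝ → Matrix (Fin n) (Fin n) ℝ) (τ : ℝ) : Prop :=
  ∀ x : ℝ → EuclideanSpace ℝ (Fin n),
    (∀ t ∈ Set.Ico (0 : ℝ) τ, HasDerivAt x (mulVecE (A t) (x t)) t) →
    Filter.Tendsto (fun t => ‖x t‖) (𝓝[<] τ) (𝓝 0)

open Set

private lemma hasDerivWithinAt_of_nmem_closure' {E : Type*} [NormedAddCommGroup E]
    [NormedSpace ℝ E] {f : ℝ → E} {d : E} {s : Set ℝ} {x : ℝ}
    (h : x ∉ closure s) : HasDerivWithinAt f d s x := by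
  have := (HasFDerivWithinAt.of_notMem_closure
    (f := f) (f' := ContinuousLinearMap.smulRight (1 : ℝ →L[ℝ] ℝ) d) h).hasDerivWithinAt
  simpa using this

private lemma hasDerivWithinAt_singleton' {E : Type*} [NormedAddCommGroup E]
    [NormedSpace ℝ E] (f : ℝ → E) (d : E) (x : ℝ) :
    HasDerivWithinAt f d {x} x := by
  rw [← hasDerivWithinAt_diff_singleton, Set.diff_self]
  exact hasDerivWithinAt_of_nmem_closure' (by simp)

private noncomputable def clmOfMatrixₗ (n : ℕ) :
    Matrix (Fin n) (Fin n) ℝ →ₗ[ℝ] (EuclideanSpace ℝ (Fin n) →L[ℝ] EuclideanSpace ℝ (Fin n)) where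
  toFun M := Matrix.toEuclideanCLM (𝕜 := ℝ) M
  map_add' a b := by simp [map_add]
  map_smul' c a := by simp [_root_.map_smul]

private lemma continuous_toEuclideanCLM (n : ℕ) :
    Continuous fun M : Matrix (Fin n) (Fin n) ℝ => Matrix.toEuclideanCLM (𝕜 := ℝ) M :=
  (clmOfMatrixₗ n).continuous_of_finiteDimensional

/-- Global-in-time existence of solutions for bounded linear ODEs, built by gluing
Picard–Lindelöf solutions on intervals of length `h`. -/
private lemma exists_sol {n : ℕ} (B : ℝ → Matrix (Fin n) (Fin n) ℝ) (hB : Continuous B)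
    (M : ℝ) (hM0 : 0 ≤ M)
    (hM : ∀ t, ‖Matrix.toEuclideanCLM (𝕜 := ℝ) (B t)‖ ≤ M)
    (a : ℝ) (x₀ : EuclideanSpace ℝ (Fin n)) (h : ℝ) (hh : 0 < h) (hMh : M * h ≤ 1/2) :
    ∀ k : ℕ, ∃ x : ℝ → EuclideanSpace ℝ (Fin n), x a = x₀ ∧
      ∀ t ∈ Icc a (a + (k : ℝ) * h),
        HasDerivWithinAt x (mulVecE (B t) (x t)) (Icc a (a + (k : ℝ) * h)) t := by
  intro k
  induction k with
  | zero =>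
    refine ⟨fun _ => x₀, rfl, ?_⟩
    intro t ht
    simp only [Nat.cast_zero, zero_mul, add_zero, Icc_self, mem_singleton_iff] at ht ⊢
    subst ht
    exact hasDerivWithinAt_singleton' _ _ _
  | succ k ih =>
    obtain ⟨x, hx0, hx⟩ := ih
    have hc' : a + ((k+1 : ℕ) : ℝ) * h = (a + (k : ℝ) * h) + h := by push_cast; ring
    rw [hc']
    set b : ℝ := a + (k : ℝ) * h with hbdef
    set c : ℝ := b + h with hcdef
    have hab : a ≤ b := by
      rw [hbdef]
      have : (0:ℝ) ≤ (k : ℝ) * h := by positivity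
      linarith
    have hbc : b < c := by rw [hcdef]; linarith
    set R : ℝ := ‖x b‖ + 1 with hR
    have hR0 : (0:ℝ) ≤ R := by rw [hR]; positivity
    have hL0 : (0:ℝ) ≤ M * (‖x b‖ + R) := by positivity
    have hpl : IsPicardLindelof (fun t y => mulVecE (B t) y) (tmin := b) (tmax := c)
        ⟨b, le_refl _, hbc.le⟩ (x b) R.toNNReal 0 (M * (‖x b‖ + R)).toNNReal M.toNNReal := by
      refine ⟨?_, ?_, ?_, ?_⟩
      · intro t _
        have h1 : LipschitzWith M.toNNReal (fun y => mulVecE (B t) y) := by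
          simp only [mulVecE]
          refine (Matrix.toEuclideanCLM (𝕜 := ℝ) (B t)).lipschitz.weaken ?_
          rw [← NNReal.coe_le_coe, coe_nnnorm, Real.coe_toNNReal _ hM0]
          exact hM t
        exact h1.lipschitzOnWith
      · intro y _
        simp only [mulVecE]
        exact (((continuous_toEuclideanCLM n).comp hB).clm_apply continuous_const).continuousOn
      · intro t _ y hy
        rw [Real.coe_toNNReal _ hR0] at hy
        rw [Real.coe_toNNReal _ hL0]
        have h1 : ‖y‖ ≤ ‖x b‖ + R := by
          have h2 := mem_closedBall_iff_norm.mp hy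
          have h3 := norm_sub_norm_le y (x b)
          linarith
        calc ‖mulVecE (B t) y‖ ≤ ‖Matrix.toEuclideanCLM (𝕜 := ℝ) (B t)‖ * ‖y‖ :=
              (Matrix.toEuclideanCLM (𝕜 := ℝ) (B t)).le_opNorm y
          _ ≤ M * (‖x b‖ + R) := mul_le_mul (hM t) h1 (norm_nonneg y) hM0
      · have hmax : max (c - b) (b - b) = h := by
          rw [hcdef]; simp [hh.le]
        dsimp only
        simp only [NNReal.coe_zero, sub_zero]
        rw [Real.coe_toNNReal _ hL0, Real.coe_toNNReal _ hR0]
        rw [hmax]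
        have h0 : (0:ℝ) ≤ ‖x b‖ := norm_nonneg _
        rw [hR]
        nlinarith
    obtain ⟨g, hg0, hg⟩ : ∃ g : ℝ → EuclideanSpace ℝ (Fin n), g b = x b ∧ ∀ t ∈ Icc b c,
        HasDerivWithinAt g (mulVecE (B t) (g t)) (Icc b c) t :=
      hpl.exists_eq_forall_mem_Icc_hasDerivWithinAt₀
    classical
    set y : ℝ → EuclideanSpace ℝ (Fin n) := fun t => if t ≤ b then x t else g t with hy
    have hyx : ∀ s ∈ Iic b, y s = x s := fun s hs => if_pos hs
    have hyg : ∀ s ∈ Ici b, y s = g s := by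
      intro s hs
      rcases eq_or_lt_of_le (show b ≤ s from hs) with h1 | h1
      · subst h1
        simp only [hy, le_refl, if_pos, hg0]
      · simp only [hy, if_neg (not_le.mpr h1)]
    refine ⟨y, ?_, ?_⟩
    · simp only [hy, if_pos hab, hx0]
    · intro t ht
      have H1 : HasDerivWithinAt y (mulVecE (B t) (y t)) (Icc a b) t := by
        by_cases htb : t ≤ b
        · have ht' : t ∈ Icc a b := ⟨ht.1, htb⟩
          have h2 := (hx t ht').congr (fun s hs => hyx s hs.2) (hyx t htb)
          rwa [hyx t htb]
        · refine hasDerivWithinAt_of_nmem_closure' ?_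
          rw [closure_Icc]
          exact fun hc => htb hc.2
      have H2 : HasDerivWithinAt y (mulVecE (B t) (y t)) (Icc b c) t := by
        by_cases hbt : b ≤ t
        · have ht' : t ∈ Icc b c := ⟨hbt, ht.2⟩
          have h2 := (hg t ht').congr (fun s hs => hyg s hs.1) (hyg t hbt)
          rwa [hyg t hbt]
        · refine hasDerivWithinAt_of_nmem_closure' ?_
          rw [closure_Icc]
          exact fun hc => hbt hc.1
      exact (H1.union H2).mono Icc_subset_Icc_union_Icc

/-- Corollary 1: a PTA system whose entries have extended-real limits
has at least one entry with `|A_{ij}(t)| → +∞` as `t → τ⁻`. -/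
theorem stmt4 {n : ℕ} (hn : 0 < n) (τ : ℝ) (hτ : 0 < τ)
    (A : ℝ → Matrix (Fin n) (Fin n) ℝ) (hA : ContinuousOn A (Set.Ico 0 τ))
    (hPTA : PTA A τ)
    (hlim : ∀ i j : Fin n, ∃ L : EReal,
      Tendsto (fun t => ((A t i j : ℝ) : EReal)) (𝓝[<] τ) (𝓝 L)) :
    ∃ i j : Fin n, Tendsto (fun t => |A t i j|) (𝓝[<] τ) atTop := by
  have hIoo : Ioo (0:ℝ) τ ∈ 𝓝[<] τ := by
    rw [← Ioi_inter_Iio]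
    exact inter_mem (mem_nhdsWithin_of_mem_nhds (Ioi_mem_nhds hτ)) self_mem_nhdsWithin
  by_cases hfin : ∀ i j : Fin n, ∃ l : ℝ, Tendsto (fun t => A t i j) (𝓝[<] τ) (𝓝 l)
  case neg =>
    push_neg at hfin
    obtain ⟨i, j, hij⟩ := hfin
    obtain ⟨L, hL⟩ := hlim i j
    refine ⟨i, j, ?_⟩
    induction L with
    | coe l => exact absurd (EReal.tendsto_coe.mp hL) (hij l)
    | bot =>
      rw [tendsto_atTop]
      intro b
      have hev := hL.eventually (eventually_lt_nhds (EReal.bot_lt_coe (-(|b|+1))))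
      filter_upwards [hev] with t ht
      have h1 : A t i j < -(|b|+1) := by exact_mod_cast ht
      have h2 := neg_le_abs (A t i j)
      have h3 := le_abs_self b
      linarith
    | top =>
      rw [tendsto_atTop]
      intro b
      have hev := hL.eventually (eventually_gt_nhds (EReal.coe_lt_top b))
      filter_upwards [hev] with t ht
      have h1 : b < A t i j := by exact_mod_cast ht
      exact h1.le.trans (le_abs_self _)
  case pos =>
    exfalso
    classical
    choose Lm hLm using hfin
    set B : ℝ → Matrix (Fin n) (Fin n) ℝ :=
      fun t => if t < τ then A (max t 0) else Lm with hBdef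
    have hBA : ∀ t ∈ Ico (0:ℝ) τ, B t = A t := by
      intro t ht
      simp only [hBdef, if_pos ht.2, max_eq_left ht.1]
      exact if_pos ht.2
    have hAt : Tendsto A (𝓝[<] τ) (𝓝 Lm) :=
      tendsto_pi_nhds.mpr fun i => tendsto_pi_nhds.mpr fun j => hLm i j
    have hBcont : Continuous B := by
      rw [continuous_iff_continuousAt]
      intro t
      rcases lt_trichotomy t τ with hlt | heq | hgt
      · have hc : ContinuousAt (A ∘ fun s : ℝ => max s 0) t := by
          have hmt : max t 0 ∈ Ico (0:ℝ) τ := by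
            refine ⟨le_max_right _ _, ?_⟩
            rcases le_or_gt t 0 with h0 | h0
            · rw [max_eq_right h0]; exact hτ
            · rwa [max_eq_left h0.le]
          have h1 : ContinuousWithinAt A (Ico 0 τ) (max t 0) := hA _ hmt
          have h2 : ContinuousWithinAt (fun s : ℝ => max s 0) (Iio τ) t :=
            (continuous_id.max continuous_const).continuousWithinAt
          have h3 : MapsTo (fun s : ℝ => max s 0) (Iio τ) (Ico 0 τ) := by
            intro s hs
            show max s 0 ∈ Ico (0:ℝ) τ
            refine ⟨le_max_right _ _, ?_⟩
            rcases le_or_gt s 0 with h0 | h0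
            · rw [max_eq_right h0]; exact hτ
            · rw [max_eq_left h0.le]; exact hs
          exact ContinuousWithinAt.continuousAt
            (ContinuousWithinAt.comp (g := A) (f := fun s : ℝ => max s 0) h1 h2 h3)
            (Iio_mem_nhds hlt)
        refine hc.congr ?_
        filter_upwards [Iio_mem_nhds hlt] with s hs
        show (A ∘ fun s : ℝ => max s 0) s = B s
        simp only [hBdef, Function.comp]
        exact (if_pos (hs : s < τ)).symm
      · subst heq
        have hBτ : B t = Lm := by rw [hBdef]; exact if_neg (lt_irrefl t)
        unfold ContinuousAt
        rw [hBτ, ← nhdsLT_sup_nhdsGE t, tendsto_sup]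
        constructor
        · refine hAt.congr' ?_
          filter_upwards [hIoo] with s hs
          simp only [hBdef, if_pos hs.2, max_eq_left hs.1.le]
          exact (if_pos hs.2).symm
        · refine Tendsto.congr' ?_
            (tendsto_const_nhds : Tendsto (fun _ : ℝ => Lm) (𝓝[≥] t) (𝓝 Lm))
          filter_upwards [self_mem_nhdsWithin] with s hs
          show Lm = B s
          simp only [hBdef]
          exact (if_neg (not_lt.mpr (hs : t ≤ s))).symm
      · have hc : ContinuousAt (fun _ : ℝ => Lm) t := continuousAt_const
        refine hc.congr ?_
        filter_upwards [Ioi_mem_nhds hgt] with s hs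
        simp only [hBdef, if_neg (not_lt.mpr (show τ < s from hs).le)]
        exact (if_neg (not_lt.mpr (show τ < s from hs).le)).symm
    obtain ⟨C, hC⟩ := (isCompact_Icc (a := (0:ℝ)) (b := τ)).exists_bound_of_continuousOn
      (((continuous_toEuclideanCLM n).comp hBcont).continuousOn)
    set M : ℝ := max C 0 with hMdef
    have hM0 : 0 ≤ M := le_max_right _ _
    have hM : ∀ t, ‖Matrix.toEuclideanCLM (𝕜 := ℝ) (B t)‖ ≤ M := by
      intro t
      rcases lt_or_ge t 0 with h0 | h0
      · have hBt : B t = B 0 := by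
          simp only [hBdef, if_pos (show t < τ by linarith), if_pos hτ,
            max_eq_right h0.le, max_self]
          exact (if_pos (show t < τ by linarith)).trans (if_pos hτ).symm
        rw [hBt]
        exact le_trans (hC 0 ⟨le_refl _, hτ.le⟩) (le_max_left _ _)
      · rcases lt_or_ge t τ with h1 | h1
        · exact le_trans (hC t ⟨h0, h1.le⟩) (le_max_left _ _)
        · have hBt : B t = B τ := by
            simp only [hBdef, if_neg (not_lt.mpr h1), if_neg (lt_irrefl τ)]
            exact (if_neg (not_lt.mpr h1)).trans (if_neg (lt_irrefl τ)).symm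
          rw [hBt]
          exact le_trans (hC τ ⟨hτ.le, le_refl _⟩) (le_max_left _ _)
    set h : ℝ := 1 / (2 * (M + 1)) with hhdef
    have hh : 0 < h := by rw [hhdef]; positivity
    have hMh : M * h ≤ 1/2 := by
      rw [hhdef, mul_one_div, div_le_iff₀ (by positivity : (0:ℝ) < 2 * (M+1))]
      linarith
    set k : ℕ := ⌈(τ + 2) / h⌉₊ with hkdef
    have hk : τ + 2 ≤ (k : ℝ) * h := by
      rw [hkdef]
      exact (div_le_iff₀ hh).mp (Nat.le_ceil _)
    obtain ⟨x, hx0, hx⟩ := exists_sol B hBcont M hM0 hM (-1)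
      (EuclideanSpace.single (⟨0, hn⟩ : Fin n) (1:ℝ)) h hh hMh k
    set b' : ℝ := -1 + (k : ℝ) * h with hb'def
    have hτb' : τ + 1 ≤ b' := by rw [hb'def]; linarith
    have hcontx : ContinuousOn x (Icc (-1) b') := fun t ht => (hx t ht).continuousWithinAt
    have hDeriv : ∀ t ∈ Ioo (-1:ℝ) b', HasDerivAt x (mulVecE (B t) (x t)) t :=
      fun t ht => (hx t (Ioo_subset_Icc_self ht)).hasDerivAt (Icc_mem_nhds ht.1 ht.2)
    have htest : ∀ t ∈ Ico (0:ℝ) τ, HasDerivAt x (mulVecE (A t) (x t)) t := by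
      intro t ht
      have h1 := hDeriv t ⟨by linarith [ht.1], by linarith [ht.2, hτb']⟩
      rwa [hBA t ht] at h1
    have htend := hPTA x htest
    have hlow : ∀ T ∈ Ico (0:ℝ) τ, Real.exp (-(M*(τ+1))) ≤ ‖x T‖ := by
      intro T hT
      have hT0 : (0:ℝ) ≤ T := hT.1
      have hTτ : T < τ := hT.2
      set f : ℝ → EuclideanSpace ℝ (Fin n) := fun s => x (T - s) with hfdef
      have hmaps : MapsTo (fun s : ℝ => T - s) (Icc 0 (T+1)) (Icc (-1) b') := by
        intro s hs
        rw [mem_Icc] at hs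
        show T - s ∈ Icc (-1) b'
        rw [mem_Icc]
        constructor <;> linarith [hs.1, hs.2]
      have hfc : ContinuousOn f (Icc 0 (T+1)) :=
        hcontx.comp ((continuous_const.sub continuous_id).continuousOn) hmaps
      have hf' : ∀ s ∈ Ico 0 (T+1),
          HasDerivWithinAt f (-(mulVecE (B (T-s)) (x (T-s)))) (Ici s) s := by
        intro s hs
        have hmem : T - s ∈ Ioo (-1:ℝ) b' := by
          rw [mem_Ioo]
          have h1 := hs.1
          have h2 := hs.2
          constructor <;> linarith
        have hx' := hDeriv _ hmem
        have hu : HasDerivAt (fun s : ℝ => T - s) (-1) s := (hasDerivAt_id s).const_sub T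
        have hcomp := HasDerivAt.scomp (𝕜 := ℝ) s hx' hu
        have hcomp' : HasDerivAt f (-(mulVecE (B (T-s)) (x (T-s)))) s := by
          rw [neg_one_smul] at hcomp; exact hcomp
        exact hcomp'.hasDerivWithinAt
      have hbound : ∀ s ∈ Ico 0 (T+1),
          ‖-(mulVecE (B (T-s)) (x (T-s)))‖ ≤ M * ‖f s‖ + 0 := by
        intro s hs
        rw [norm_neg, add_zero]
        calc ‖mulVecE (B (T-s)) (x (T-s))‖
            ≤ ‖Matrix.toEuclideanCLM (𝕜 := ℝ) (B (T-s))‖ * ‖x (T-s)‖ :=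
              (Matrix.toEuclideanCLM (𝕜 := ℝ) (B (T-s))).le_opNorm _
          _ ≤ M * ‖f s‖ := mul_le_mul_of_nonneg_right (hM _) (norm_nonneg _)
      have hgr := norm_le_gronwallBound_of_norm_deriv_right_le
        (f' := fun s => -(mulVecE (B (T-s)) (x (T-s)))) hfc hf' (le_refl ‖f 0‖) hbound
        (T+1) ⟨by linarith, le_refl _⟩
      rw [gronwallBound_ε0] at hgr
      have hf0 : f 0 = x T := by rw [hfdef]; simp
      have hfT : f (T+1) = EuclideanSpace.single (⟨0, hn⟩ : Fin n) (1:ℝ) := by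
        rw [hfdef]
        simp only
        rw [show T - (T+1) = -1 by ring, hx0]
      rw [hf0, hfT, EuclideanSpace.norm_single, norm_one, sub_zero] at hgr
      have hexp : Real.exp (M*(T+1)) ≤ Real.exp (M*(τ+1)) :=
        Real.exp_le_exp.2 (by nlinarith)
      have h1 : 1 ≤ ‖x T‖ * Real.exp (M*(τ+1)) :=
        le_trans hgr (mul_le_mul_of_nonneg_left hexp (norm_nonneg _))
      calc Real.exp (-(M*(τ+1))) = Real.exp (-(M*(τ+1))) * 1 := (mul_one _).symm
        _ ≤ Real.exp (-(M*(τ+1))) * (‖x T‖ * Real.exp (M*(τ+1))) :=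
            mul_le_mul_of_nonneg_left h1 (Real.exp_pos _).le
        _ = ‖x T‖ * (Real.exp (-(M*(τ+1))) * Real.exp (M*(τ+1))) := by ring
        _ = ‖x T‖ := by rw [← Real.exp_add, neg_add_cancel, Real.exp_zero, mul_one]
    have hc : (0:ℝ) < Real.exp (-(M*(τ+1))) := Real.exp_pos _
    have hev1 : ∀ᶠ t in 𝓝[<] τ, ‖x t‖ < Real.exp (-(M*(τ+1))) :=
      htend.eventually (eventually_lt_nhds hc)
    have hev2 : ∀ᶠ t in 𝓝[<] τ, t ∈ Ico (0:ℝ) τ :=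
      eventually_of_mem hIoo fun t ht => ⟨ht.1.le, ht.2⟩
    obtain ⟨t, h1, h2⟩ := (hev1.and hev2).exists
    exact absurd (hlow t h2) (not_le.mpr h1)
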